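/- Let x₁,…,xₙ ∈ ℝ^d be the rows of X ∈ ℝ^{n×d}, y ∈ ℝⁿ, α ∈ (0,∞)^d, and let w₊, w₋ : [0,∞) → ℝ^d be differentiable with w₊(0) = w₋(0) = α, satisfying w₊'(t) = −[(1/n)·Xᵀ(Xβ(t) − y)] ⊙ w₊(t) and w₋'(t) = +[(1/n)·Xᵀ(Xβ(t) − y)] ⊙ w₋(t), where β(t) = w₊(t)² − w₋(t)². Then for all t ≥ 0, with a(t) := (1/n)·Xᵀ ∫₀ᵗ (Xβ(s) − y) ds ∈ ℝ^d, one has the closed forms w₊(t) = α ⊙ exp(−a(t)), w₋(t) = α ⊙ exp(a(t)) (exp coordinate-wise), and β(t) = 2α² ⊙ sinh(−2a(t)) (sinh coordinate-wise). -/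

import Mathlib

theorem stmt_19 {n d : ℕ} (hn : 0 < n) (X : Matrix (Fin n) (Fin d) ℝ) (y : Fin n → ℝ)
    (α : Fin d → ℝ) (hα : ∀ i, 0 < α i)
    (wp wm : ℝ → Fin d → ℝ) (hw0 : wp 0 = α ∧ wm 0 = α)
    (β : ℝ → Fin d → ℝ) (hβ : ∀ t, β t = fun j => wp t j ^ 2 - wm t j ^ 2)
    (hflowp : ∀ t : ℝ, HasDerivAt wp
      (fun j => -(((1 / (n : ℝ)) * X.transpose.mulVec (X.mulVec (β t) - y) j) * wp t j)) t)
    (hflowm : ∀ t : ℝ, HasDerivAt wm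
      (fun j => ((1 / (n : ℝ)) * X.transpose.mulVec (X.mulVec (β t) - y) j) * wm t j) t)
    (a : ℝ → Fin d → ℝ)
    (ha : ∀ t, a t = fun j =>
      (1 / (n : ℝ)) * X.transpose.mulVec (∫ s in (0 : ℝ)..t, (X.mulVec (β s) - y)) j) :
    ∀ t : ℝ, 0 ≤ t → ∀ j : Fin d,
      wp t j = α j * Real.exp (-(a t j)) ∧
      wm t j = α j * Real.exp (a t j) ∧
      β t j = 2 * α j ^ 2 * Real.sinh (-(2 * a t j)) := by
  obtain ⟨hwp0, hwm0⟩ := hw0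
  set c : ℝ → Fin d → ℝ :=
    fun t j => (1 / (n : ℝ)) * X.transpose.mulVec (X.mulVec (β t) - y) j with hc
  -- continuity facts
  have hwpC : Continuous wp := continuous_iff_continuousAt.2 fun t => (hflowp t).continuousAt
  have hwmC : Continuous wm := continuous_iff_continuousAt.2 fun t => (hflowm t).continuousAt
  have hβC : Continuous β := by
    have hβeq : β = fun t j => wp t j ^ 2 - wm t j ^ 2 := funext hβ
    rw [hβeq]
    exact continuous_pi fun j =>
      (((continuous_apply j).comp hwpC).pow 2).sub (((continuous_apply j).comp hwmC).pow 2)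
  have hT : ∀ (v : Fin n → ℝ) (j : Fin d), X.transpose.mulVec v j = ∑ i, X i j * v i := by
    intro v j
    simp [Matrix.mulVec, dotProduct, Matrix.transpose_apply]
  have hfC : ∀ i : Fin n, Continuous fun s => X.mulVec (β s) i - y i := by
    intro i
    have : Continuous fun s => X.mulVec (β s) i := by
      simp only [Matrix.mulVec, dotProduct]
      exact continuous_finset_sum _ fun j _ =>
        (continuous_const.mul ((continuous_apply j).comp hβC))
    exact this.sub continuous_const
  have hfCv : Continuous fun s => X.mulVec (β s) - y := by
    exact continuous_pi fun i => hfC i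
  -- component formula for a
  have hproj : ∀ t (i : Fin n),
      (∫ s in (0 : ℝ)..t, (X.mulVec (β s) - y)) i
        = ∫ s in (0 : ℝ)..t, (X.mulVec (β s) i - y i) := by
    intro t i
    have := (ContinuousLinearMap.proj (R := ℝ) (φ := fun _ : Fin n => ℝ) i
      ).intervalIntegral_comp_comm (μ := MeasureTheory.volume) (hfCv.intervalIntegrable 0 t)
    simpa using this.symm
  have ha' : ∀ t j, a t j
      = (1 / (n : ℝ)) * ∑ i, X i j * ∫ s in (0 : ℝ)..t, (X.mulVec (β s) i - y i) := by
    intro t j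
    rw [ha]
    simp only [hT]
    congr 1
    exact Finset.sum_congr rfl fun i _ => by rw [hproj t i]
  -- derivative of a
  have haD : ∀ (t : ℝ) (j : Fin d), HasDerivAt (fun u => a u j) (c t j) t := by
    intro t j
    have hsum : HasDerivAt
        (fun u => (1 / (n : ℝ)) * ∑ i, X i j * ∫ s in (0 : ℝ)..u, (X.mulVec (β s) i - y i))
        ((1 / (n : ℝ)) * ∑ i, X i j * (X.mulVec (β t) i - y i)) t := by
      refine HasDerivAt.const_mul _ (HasDerivAt.fun_sum fun i _ => HasDerivAt.const_mul _ ?_)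
      exact intervalIntegral.integral_hasDerivAt_right ((hfC i).intervalIntegrable 0 t)
        ((hfC i).stronglyMeasurableAtFilter _ _) (hfC i).continuousAt
    have heq : (fun u => a u j)
        = fun u => (1 / (n : ℝ)) * ∑ i, X i j * ∫ s in (0 : ℝ)..u, (X.mulVec (β s) i - y i) :=
      funext fun u => ha' u j
    rw [heq]
    convert hsum using 1
    simp only [hc, hT, Pi.sub_apply]
  have ha0 : ∀ j, a 0 j = 0 := by
    intro j
    rw [ha']
    simp
  intro t _ j
  -- wp closed form
  have hwpj : ∀ s, HasDerivAt (fun u => wp u j) (-(c s j * wp s j)) s := fun s =>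
    hasDerivAt_pi.1 (hflowp s) j
  have hwmj : ∀ s, HasDerivAt (fun u => wm u j) (c s j * wm s j) s := fun s =>
    hasDerivAt_pi.1 (hflowm s) j
  have hP : ∀ s : ℝ, HasDerivAt (fun u => wp u j * Real.exp (a u j)) 0 s := by
    intro s
    have := (hwpj s).fun_mul ((haD s j).exp)
    refine this.congr_deriv ?_
    ring
  have hM : ∀ s : ℝ, HasDerivAt (fun u => wm u j * Real.exp (-(a u j))) 0 s := by
    intro s
    have := (hwmj s).fun_mul ((haD s j).neg.exp)
    refine this.congr_deriv ?_
    ring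
  have hPconst : wp t j * Real.exp (a t j) = α j := by
    have := is_const_of_deriv_eq_zero (f := fun u => wp u j * Real.exp (a u j))
      (fun s => (hP s).differentiableAt) (fun s => (hP s).deriv) t 0
    rw [this, hwp0, ha0]
    simp
  have hMconst : wm t j * Real.exp (-(a t j)) = α j := by
    have := is_const_of_deriv_eq_zero (f := fun u => wm u j * Real.exp (-(a u j)))
      (fun s => (hM s).differentiableAt) (fun s => (hM s).deriv) t 0
    rw [this, hwm0, ha0]
    simp
  have hwpt : wp t j = α j * Real.exp (-(a t j)) := by
    have h := hPconst
    rw [Real.exp_neg]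
    field_simp at h ⊢
    linarith [h]
  have hwmt : wm t j = α j * Real.exp (a t j) := by
    have h := hMconst
    rw [Real.exp_neg] at h
    field_simp at h
    linarith [h]
  refine ⟨hwpt, hwmt, ?_⟩
  have e1 : Real.exp (-(a t j)) ^ 2 = Real.exp (-(2 * a t j)) := by
    rw [sq, ← Real.exp_add]; congr 1; ring
  have e2 : Real.exp (a t j) ^ 2 = Real.exp (2 * a t j) := by
    rw [sq, ← Real.exp_add]; congr 1; ring
  rw [hβ]
  simp only [hwpt, hwmt, mul_pow, e1, e2, Real.sinh_eq, neg_neg]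
  ring
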